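/- Let F be a field with char F ≠ 2 and β_1 ∈ F with β_1 ≠ 0 such that t³ - β_1 has no root in F. Then the 2-dimensional F-algebra with basis (e_1, e_2) and products e_1e_1 = β_1 e_2, e_1e_2 = 0, e_2e_1 = 0, e_2e_2 = e_1 is simple. -/

import Mathlib

/-- Over a field of characteristic ≠ 2, if β₁ ≠ 0 and t³ - β₁ has no root in F,
the two-dimensional algebra with e₁e₁ = β₁e₂, e₁e₂ = 0, e₂e₁ = 0, e₂e₂ = e₁ is
simple: its product is nonzero and its only two-sided ideals are {0} and the
whole algebra. -/
theorem stmt_17 {F : Type*} [Field F] (hchar : ringChar F ≠ 2)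
    (β₁ : F) (hβ₁ : β₁ ≠ 0) (hroot : ∀ t : F, t ^ 3 ≠ β₁)
    (mul : (Fin 2 → F) → (Fin 2 → F) → (Fin 2 → F))
    (hmul : ∀ x y, mul x y =
      (x 0 * y 0) • ![(0 : F), β₁] + (x 1 * y 1) • ![(1 : F), 0]) :
    (∃ x y, mul x y ≠ 0) ∧
      ∀ I : Submodule F (Fin 2 → F),
        (∀ x y, y ∈ I → mul x y ∈ I ∧ mul y x ∈ I) → I = ⊥ ∨ I = ⊤ := by
  constructor
  · refine ⟨![1, 0], ![1, 0], fun h => hβ₁ ?_⟩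
    have := congrFun h 1
    rw [hmul] at this
    simpa using this
  · intro I hI
    by_cases hbot : I = ⊥
    · exact Or.inl hbot
    right
    obtain ⟨v, hv, hv0⟩ := Submodule.exists_mem_ne_zero_of_ne_bot hbot
    -- Show both basis vectors are in I
    have key : (![1, 0] : Fin 2 → F) ∈ I ∧ (![0, 1] : Fin 2 → F) ∈ I := by
      by_cases h0 : v 0 = 0
      · have h1 : v 1 ≠ 0 := by
          intro h1
          apply hv0
          funext i
          fin_cases i <;> simp [h0, h1]
        -- mul ![0,1] v = v 1 • ![1,0]
        have hm := (hI ![0, 1] v hv).1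
        rw [hmul] at hm
        have he1 : (![1, 0] : Fin 2 → F) ∈ I := by
          have := I.smul_mem (v 1)⁻¹ hm
          convert this using 1
          funext i
          fin_cases i <;> simp [h0, h1]
        refine ⟨he1, ?_⟩
        have hm2 := (hI ![1, 0] ![1, 0] he1).1
        rw [hmul] at hm2
        have := I.smul_mem β₁⁻¹ hm2
        convert this using 1
        funext i
        fin_cases i <;> simp [hβ₁]
      · -- mul ![1,0] v = (v 0) • ![0, β₁]
        have hm := (hI ![1, 0] v hv).1
        rw [hmul] at hm
        have he2 : (![0, 1] : Fin 2 → F) ∈ I := by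
          have := I.smul_mem (v 0 * β₁)⁻¹ hm
          convert this using 1
          funext i
          fin_cases i <;> simp [h0, hβ₁] <;> field_simp
        refine ⟨?_, he2⟩
        have hm2 := (hI ![0, 1] ![0, 1] he2).1
        rw [hmul] at hm2
        convert hm2 using 1
        funext i
        fin_cases i <;> simp
    rw [eq_top_iff]
    intro x _
    have : x = x 0 • ![1, 0] + x 1 • ![0, 1] := by
      funext i
      fin_cases i <;> simp
    rw [this]
    exact I.add_mem (I.smul_mem _ key.1) (I.smul_mem _ key.2)
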